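/- With the setup of the order map: if θ ∈ ℝ^n is in the complement of the closed lopsided coamoeba of f, then the vector v(θ) = (Arg_π(c) + p(θ))·B lies in the interior of the zonotope 𝒵_B = {(π/2) Σ_{j=1}^N μ_j b_j : |μ_j| ≤ 1}, where b_1,...,b_N are the rows of B. -/

import Mathlib

open Complex

theorem stmt8 (n N m : ℕ) (α : Fin N → Fin n → ℤ) (c : Fin N → ℂ) (hc : ∀ k, c k ≠ 0)
    (B : Fin N → Fin m → ℤ)
    (hB1 : ∀ j, ∑ k, B k j = 0)
    (hB2 : ∀ l j, ∑ k, α k l * B k j = 0)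
    (hBrank : LinearIndependent ℝ (fun j : Fin m => fun k : Fin N => (B k j : ℝ)))
    (i : Fin N)
    (p : Fin N → (Fin n → ℝ) → ℝ)
    (hp : ∀ k θ, p k θ =
      Complex.arg (c k * Complex.exp (((∑ l, (α k l : ℝ) * θ l : ℝ) : ℂ) * Complex.I) /
          (c i * Complex.exp (((∑ l, (α i l : ℝ) * θ l : ℝ) : ℂ) * Complex.I))) -
        Complex.arg (c k) + Complex.arg (c i) -
        ∑ l, ((α k l - α i l : ℤ) : ℝ) * θ l)
    (θ : Fin n → ℝ)
    (hθ : ∃ φ : ℝ, ∀ k, 0 < (Complex.exp ((φ : ℂ) * Complex.I) *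
        Complex.exp (((Complex.arg (c k) + ∑ l, (α k l : ℝ) * θ l : ℝ) : ℂ) * Complex.I)).re) :
    (fun j => ∑ k, (Complex.arg (c k) + p k θ) * (B k j : ℝ)) ∈
      interior {x : Fin m → ℝ | ∃ μ : Fin N → ℝ, (∀ k, |μ k| ≤ 1) ∧
        ∀ j, x j = Real.pi / 2 * ∑ k, μ k * (B k j : ℝ)} := by
  classical
  obtain ⟨φ, hφ⟩ := hθ
  set δ : Fin N → ℝ := fun k =>
    Complex.arg (Complex.exp
      (((φ + (Complex.arg (c k) + ∑ l, (α k l : ℝ) * θ l) : ℝ) : ℂ) * Complex.I)) with hδdef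
  -- each δ k lies in (-π/2, π/2)
  have hδ : ∀ k, |δ k| < Real.pi / 2 := by
    intro k
    rw [hδdef]
    rw [Complex.abs_arg_lt_pi_div_two_iff]
    left
    have hsplit : ((φ + (Complex.arg (c k) + ∑ l, (α k l : ℝ) * θ l) : ℝ) : ℂ) * Complex.I
        = (φ : ℂ) * Complex.I
          + ((Complex.arg (c k) + ∑ l, (α k l : ℝ) * θ l : ℝ) : ℂ) * Complex.I := by
      push_cast; ring
    rw [hsplit, Complex.exp_add]
    exact hφ k
  -- exp(δ k * I) equals exp((φ + ψ k) * I)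
  have hexp : ∀ k, Complex.exp
      (((φ + (Complex.arg (c k) + ∑ l, (α k l : ℝ) * θ l) : ℝ) : ℂ) * Complex.I)
      = Complex.exp ((δ k : ℂ) * Complex.I) := by
    intro k
    conv_lhs => rw [← Complex.norm_mul_exp_arg_mul_I (Complex.exp
      (((φ + (Complex.arg (c k) + ∑ l, (α k l : ℝ) * θ l) : ℝ) : ℂ) * Complex.I))]
    rw [Complex.norm_exp_ofReal_mul_I, Complex.ofReal_one, one_mul, hδdef]
  -- factorization of each term
  have hz : ∀ k, c k * Complex.exp (((∑ l, (α k l : ℝ) * θ l : ℝ) : ℂ) * Complex.I)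
      = (‖c k‖ : ℂ) * (Complex.exp (-((φ : ℂ) * Complex.I)) *
          Complex.exp ((δ k : ℂ) * Complex.I)) := by
    intro k
    rw [← hexp k]
    conv_lhs => rw [← Complex.norm_mul_exp_arg_mul_I (c k)]
    rw [mul_assoc, ← Complex.exp_add, ← Complex.exp_add]
    congr 1
    push_cast
    ring
  -- the key arg identity
  have key : ∀ k, Complex.arg (c k * Complex.exp (((∑ l, (α k l : ℝ) * θ l : ℝ) : ℂ) * Complex.I) /
      (c i * Complex.exp (((∑ l, (α i l : ℝ) * θ l : ℝ) : ℂ) * Complex.I))) = δ k - δ i := by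
    intro k
    have hratio : c k * Complex.exp (((∑ l, (α k l : ℝ) * θ l : ℝ) : ℂ) * Complex.I) /
        (c i * Complex.exp (((∑ l, (α i l : ℝ) * θ l : ℝ) : ℂ) * Complex.I))
        = ((‖c k‖ / ‖c i‖ : ℝ) : ℂ) *
          Complex.exp (((δ k - δ i : ℝ) : ℂ) * Complex.I) := by
      rw [hz k, hz i]
      have h1 : (‖c i‖ : ℂ) ≠ 0 := by
        simpa using (norm_ne_zero_iff.mpr (hc i))
      have h2 : Complex.exp (-((φ : ℂ) * Complex.I)) ≠ 0 := Complex.exp_ne_zero _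
      have h3 : Complex.exp ((δ i : ℂ) * Complex.I) ≠ 0 := Complex.exp_ne_zero _
      have he : Complex.exp (((δ k - δ i : ℝ) : ℂ) * Complex.I) *
          Complex.exp ((δ i : ℂ) * Complex.I) = Complex.exp ((δ k : ℂ) * Complex.I) := by
        rw [← Complex.exp_add]
        congr 1
        push_cast
        ring
      rw [div_eq_iff (mul_ne_zero h1 (mul_ne_zero h2 h3)), ← he, Complex.ofReal_div]
      field_simp
    rw [hratio]
    have hpos : 0 < ‖c k‖ / ‖c i‖ :=
      div_pos (norm_pos_iff.mpr (hc k)) (norm_pos_iff.mpr (hc i))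
    rw [Complex.arg_real_mul _ hpos, Complex.exp_mul_I]
    have hmem : δ k - δ i ∈ Set.Ioc (-Real.pi) Real.pi := by
      have h1 := abs_lt.mp (hδ k)
      have h2 := abs_lt.mp (hδ i)
      constructor <;> [linarith; linarith]
    simpa using Complex.arg_cos_add_sin_mul_I hmem
  -- cast sum hypotheses
  have hsum0 : ∀ j, ∑ k, (B k j : ℝ) = 0 := by
    intro j; exact_mod_cast congrArg (Int.cast : ℤ → ℝ) (hB1 j)
  have hsumα : ∀ l j, ∑ k, (α k l : ℝ) * (B k j : ℝ) = 0 := by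
    intro l j; exact_mod_cast congrArg (Int.cast : ℤ → ℝ) (hB2 l j)
  -- rewrite the vector as ∑ δ k • b_k
  have hfun : (fun j => ∑ k, (Complex.arg (c k) + p k θ) * (B k j : ℝ))
      = fun j => ∑ k, δ k * (B k j : ℝ) := by
    funext j
    have hterm : ∀ k, Complex.arg (c k) + p k θ
        = δ k + (Complex.arg (c i) - δ i + ∑ l, (α i l : ℝ) * θ l)
          - ∑ l, (α k l : ℝ) * θ l := by
      intro k
      rw [hp k θ, key k]
      have : ∑ l, ((α k l - α i l : ℤ) : ℝ) * θ l
          = (∑ l, (α k l : ℝ) * θ l) - ∑ l, (α i l : ℝ) * θ l := by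
        rw [← Finset.sum_sub_distrib]
        apply Finset.sum_congr rfl
        intro l _
        push_cast
        ring
      rw [this]
      ring
    simp only [hterm]
    have hLB : ∑ k, (∑ l, (α k l : ℝ) * θ l) * (B k j : ℝ) = 0 := by
      simp_rw [Finset.sum_mul]
      rw [Finset.sum_comm]
      apply Finset.sum_eq_zero
      intro l _
      have : ∑ k, (α k l : ℝ) * θ l * (B k j : ℝ)
          = θ l * ∑ k, (α k l : ℝ) * (B k j : ℝ) := by
        rw [Finset.mul_sum]
        apply Finset.sum_congr rfl
        intro k _
        ring
      rw [this, hsumα l j, mul_zero]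
    have expand : ∑ k, (δ k + (Complex.arg (c i) - δ i + ∑ l, (α i l : ℝ) * θ l)
          - ∑ l, (α k l : ℝ) * θ l) * (B k j : ℝ)
        = (∑ k, δ k * (B k j : ℝ))
          + (Complex.arg (c i) - δ i + ∑ l, (α i l : ℝ) * θ l) * (∑ k, (B k j : ℝ))
          - ∑ k, (∑ l, (α k l : ℝ) * θ l) * (B k j : ℝ) := by
      rw [Finset.mul_sum, ← Finset.sum_add_distrib, ← Finset.sum_sub_distrib]
      apply Finset.sum_congr rfl
      intro k _
      ring
    rw [expand, hsum0 j, hLB]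
    ring
  rw [hfun]
  -- linear algebra: the map μ ↦ μ·B is a surjective continuous linear map
  set M : Matrix (Fin m) (Fin N) ℝ := Matrix.of fun j k => (B k j : ℝ) with hM
  have hMli : LinearIndependent ℝ M := hBrank
  have hrank : M.rank = Fintype.card (Fin m) := hMli.rank_matrix
  have hsurj : Function.Surjective M.mulVecLin := by
    rw [← LinearMap.range_eq_top]
    apply Submodule.eq_top_of_finrank_eq
    rw [show Module.finrank ℝ (LinearMap.range M.mulVecLin) = M.rank from rfl, hrank,
      Module.finrank_fintype_fun_eq_card]
  set T : (Fin N → ℝ) →L[ℝ] (Fin m → ℝ) := LinearMap.toContinuousLinearMap M.mulVecLin with hT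
  have hTopen : IsOpenMap T := ContinuousLinearMap.isOpenMap T hsurj
  set C : Set (Fin N → ℝ) := {μ | ∀ k, |μ k| < Real.pi / 2} with hC
  have hCopen : IsOpen C := by
    have : C = ⋂ k, {μ : Fin N → ℝ | |μ k| < Real.pi / 2} := by
      ext μ; simp [hC, Set.mem_iInter]
    rw [this]
    apply isOpen_iInter_of_finite
    intro k
    exact isOpen_lt ((continuous_apply k).abs) continuous_const
  have hTapp : ∀ μ : Fin N → ℝ, T μ = fun j => ∑ k, μ k * (B k j : ℝ) := by
    intro μ
    funext j
    show (M.mulVec μ) j = _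
    simp only [Matrix.mulVec, dotProduct, hM, Matrix.of_apply]
    apply Finset.sum_congr rfl
    intro k _
    ring
  have himg : T '' C ⊆ {x : Fin m → ℝ | ∃ μ : Fin N → ℝ, (∀ k, |μ k| ≤ 1) ∧
      ∀ j, x j = Real.pi / 2 * ∑ k, μ k * (B k j : ℝ)} := by
    rintro x ⟨μ, hμ, rfl⟩
    have hpi : (0 : ℝ) < Real.pi / 2 := by positivity
    refine ⟨fun k => μ k / (Real.pi / 2), fun k => ?_, fun j => ?_⟩
    · rw [abs_div, abs_of_pos hpi, div_le_one hpi]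
      exact (hμ k).le
    · rw [hTapp μ]
      simp only []
      rw [Finset.mul_sum]
      apply Finset.sum_congr rfl
      intro k _
      have hpne : (Real.pi / 2 : ℝ) ≠ 0 := by positivity
      field_simp
  have hmemC : δ ∈ C := hδ
  have : T '' C ⊆ interior {x : Fin m → ℝ | ∃ μ : Fin N → ℝ, (∀ k, |μ k| ≤ 1) ∧
      ∀ j, x j = Real.pi / 2 * ∑ k, μ k * (B k j : ℝ)} :=
    interior_maximal himg (hTopen C hCopen)
  have hTδ : T δ = fun j => ∑ k, δ k * (B k j : ℝ) := hTapp δ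
  exact hTδ ▸ this ⟨δ, hmemC, rfl⟩
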